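/- Let k : (0,∞) → [0,∞) be nonincreasing and integrable, and let F : (0,∞) → [0,∞) be measurable. Then ∫_0^∞ k(s) F(s) ds ≤ 2 · (sup_{r>0} (1/r) ∫_0^r F(s) ds) · ∫_0^∞ k(s) ds. -/

import Mathlib

open MeasureTheory Real Complex Filter
open scoped ENNReal Topology FourierTransform RealInnerProductSpace

noncomputable section

/-- The symbol class `𝕊(γ, κ, M)`: complex-valued measurable symbols `ψ(t,ξ)` with
`Re[-ψ(t,ξ)] ≥ κ|ξ|^γ` and `|D^α_ξ ψ(t,ξ)| ≤ M |ξ|^(γ-|α|)` for `|α| ≤ ⌊d/2⌋+1`, `ξ ≠ 0`. -/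
def IsSymbol (d : ℕ) (γ κ M : ℝ) (ψ : ℝ → EuclideanSpace ℝ (Fin d) → ℂ) : Prop :=
  Measurable (Function.uncurry ψ) ∧
  (∀ t ξ, κ * ‖ξ‖ ^ γ ≤ (-(ψ t ξ)).re) ∧
  (∀ t, ContDiffOn ℝ (d / 2 + 1 : ℕ) (ψ t) {ξ | ξ ≠ 0}) ∧
  (∀ t (n : ℕ), n ≤ d / 2 + 1 → ∀ ξ : EuclideanSpace ℝ (Fin d), ξ ≠ 0 →
    ‖iteratedFDerivWithin ℝ n (ψ t) {ζ : EuclideanSpace ℝ (Fin d) | ζ ≠ 0} ξ‖ ≤ M * ‖ξ‖ ^ (γ - n))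

/-- The fundamental solution `p(t,s,x) = (2π)^{-d} ∫ exp(∫_s^t ψ(r,ξ) dr) e^{i x·ξ} dξ`. -/
def fundSol {d : ℕ} (ψ : ℝ → EuclideanSpace ℝ (Fin d) → ℂ) (t s : ℝ)
    (x : EuclideanSpace ℝ (Fin d)) : ℂ :=
  ((2 * π) ^ d : ℝ)⁻¹ • ∫ ξ : EuclideanSpace ℝ (Fin d),
    Complex.exp (∫ r in s..t, ψ r ξ) * Complex.exp (Complex.I * (⟪x, ξ⟫ : ℝ))

/-- `q(t,s,x) = ∂_t p(t,s,x) = (2π)^{-d} ∫ ψ(t,ξ) exp(∫_s^t ψ(r,ξ) dr) e^{i x·ξ} dξ`. -/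
def fundSolDt {d : ℕ} (ψ : ℝ → EuclideanSpace ℝ (Fin d) → ℂ) (t s : ℝ)
    (x : EuclideanSpace ℝ (Fin d)) : ℂ :=
  ((2 * π) ^ d : ℝ)⁻¹ • ∫ ξ : EuclideanSpace ℝ (Fin d),
    ψ t ξ * Complex.exp (∫ r in s..t, ψ r ξ) * Complex.exp (Complex.I * (⟪x, ξ⟫ : ℝ))

/-- `Ψ_j(x) := 2^{jd} Ψ(2^j x)` for `j : ℤ`. -/
def LPkernel {d : ℕ} (Ψ : EuclideanSpace ℝ (Fin d) → ℂ) (j : ℤ)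
    (x : EuclideanSpace ℝ (Fin d)) : ℂ :=
  ((2 : ℝ) ^ (j * (d : ℤ))) • Ψ (((2 : ℝ) ^ j) • x)

/-- `Φ(x) := Σ_{j ≤ 0} Ψ_j(x)`. -/
def LPPhi {d : ℕ} (Ψ : EuclideanSpace ℝ (Fin d) → ℂ)
    (x : EuclideanSpace ℝ (Fin d)) : ℂ :=
  ∑' j : {n : ℤ // n ≤ 0}, LPkernel Ψ (j : ℤ) x

/-- convolution `g ∗ f (x) = ∫ g(y) f(x-y) dy`. -/
def conv {d : ℕ} (g f : EuclideanSpace ℝ (Fin d) → ℂ)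
    (x : EuclideanSpace ℝ (Fin d)) : ℂ :=
  ∫ y, g y * f (x - y)

/-- A Littlewood–Paley generating function: a Schwartz function whose Fourier transform is
nonnegative, supported in the annulus `{1/2 ≤ |ξ| ≤ 2}`, with `Σ_j ℱΨ(2^{-j} ξ) = 1` for `ξ ≠ 0`. -/
structure IsLPSystem (d : ℕ) (Ψ : EuclideanSpace ℝ (Fin d) → ℂ) : Prop where
  schwartz : ∃ Ψ' : SchwartzMap (EuclideanSpace ℝ (Fin d)) ℂ, Ψ = ⇑Ψ'
  real_nonneg : ∀ ξ, (𝓕 Ψ ξ).im = 0 ∧ 0 ≤ (𝓕 Ψ ξ).re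
  support : ∀ ξ, 𝓕 Ψ ξ ≠ 0 → 1 / 2 ≤ ‖ξ‖ ∧ ‖ξ‖ ≤ 2
  sum_one : ∀ ξ : EuclideanSpace ℝ (Fin d), ξ ≠ 0 →
    HasSum (fun j : ℤ => 𝓕 Ψ (((2 : ℝ) ^ (-j)) • ξ)) 1

/-- `L^∞`-norm. -/
def LinfNorm {d : ℕ} (f : EuclideanSpace ℝ (Fin d) → ℂ) : ℝ≥0∞ := eLpNorm f ∞ volume

/-- The Lipschitz-space norm `‖f‖_{Λ^θ} = ‖S₀ f‖_∞ + sup_{j ≥ 1} θ(2^j) ‖Δ_j f‖_∞`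
(Littlewood–Paley characterization). -/
def LambdaNorm {d : ℕ} (Ψ : EuclideanSpace ℝ (Fin d) → ℂ) (θ : ℝ → ℝ)
    (f : EuclideanSpace ℝ (Fin d) → ℂ) : ℝ≥0∞ :=
  LinfNorm (conv (LPPhi Ψ) f) +
    ⨆ j : ℕ, ENNReal.ofReal (θ ((2 : ℝ) ^ (j + 1))) *
      LinfNorm (conv (LPkernel Ψ ((j : ℤ) + 1)) f)

/-- The norm `‖f‖_{Λ_p^θ} = ‖S₀ f‖_∞ + (Σ_{j ≥ 1} θ(2^j)^p ‖Δ_j f‖_∞^p)^{1/p}`, with `Λ_∞^θ = Λ^θ`. -/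
def LambdaPNorm {d : ℕ} (Ψ : EuclideanSpace ℝ (Fin d) → ℂ) (θ : ℝ → ℝ) (p : ℝ≥0∞)
    (f : EuclideanSpace ℝ (Fin d) → ℂ) : ℝ≥0∞ :=
  if p = ∞ then LambdaNorm Ψ θ f
  else LinfNorm (conv (LPPhi Ψ) f) +
    (∑' j : ℕ, (ENNReal.ofReal (θ ((2 : ℝ) ^ (j + 1))) *
      LinfNorm (conv (LPkernel Ψ ((j : ℤ) + 1)) f)) ^ p.toReal) ^ (1 / p.toReal)

/-- Weighted mixed norm `‖u‖_{L_p((0,T), w dt; X)}` for an `X`-norm process `G t = ‖u(t,·)‖_X`. -/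
def mixedLpNorm (p : ℝ≥0∞) (w : ℝ → ℝ) (T : ℝ) (G : ℝ → ℝ≥0∞) : ℝ≥0∞ :=
  if p = ∞ then essSup G (volume.restrict (Set.Ioo 0 T))
  else (∫⁻ t in Set.Ioo 0 T, G t ^ p.toReal * ENNReal.ofReal (w t)) ^ (1 / p.toReal)

/-- The class `I_o(0, L)`: positive `φ` with `s_φ(λ) = o(1)` as `λ ↓ 0` and
`s_φ(λ) = o(λ^L)` as `λ ↑ ∞`, where `s_φ(λ) = sup_{t > 0} φ(λ t)/φ(t)`. -/
def InClassIo (L : ℝ) (φ : ℝ → ℝ) : Prop :=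
  (∀ t, 0 < t → 0 < φ t) ∧
  (∀ ε, 0 < ε → ∃ δ, 0 < δ ∧ ∀ lam t, 0 < lam → lam < δ → 0 < t →
    φ (lam * t) ≤ ε * φ t) ∧
  (∀ ε, 0 < ε → ∃ R, 0 < R ∧ ∀ lam t, R < lam → 0 < t →
    φ (lam * t) ≤ ε * lam ^ L * φ t)

/-- `φ_γ(λ) := φ(λ) λ^γ`. -/
def phiGamma (φ : ℝ → ℝ) (γ : ℝ) : ℝ → ℝ := fun lam => φ lam * lam ^ γ

/-- `W(t) := ∫_0^t w(s) ds`. -/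
def weightW (w : ℝ → ℝ) (t : ℝ) : ℝ := ∫ s in Set.Ioo (0 : ℝ) t, w s

/-- `φ_{γ,p,w}(λ) := φ(λ) λ^γ W(λ^{-γ})^{1/p}` (with `1/∞ := 0`). -/
def phiGammaPW (φ : ℝ → ℝ) (γ : ℝ) (p : ℝ≥0∞) (w : ℝ → ℝ) : ℝ → ℝ :=
  fun lam => φ lam * lam ^ γ * (weightW w (lam ^ (-γ))) ^ (1 / p.toReal)

/-- Centered Hardy–Littlewood maximal function on `ℝ` of an `ℝ≥0∞`-valued function. -/
def maximalFn (G : ℝ → ℝ≥0∞) (t : ℝ) : ℝ≥0∞ :=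
  ⨆ r : {r : ℝ // 0 < r}, (∫⁻ s in Set.Ioo (t - r) (t + r), G s) / ENNReal.ofReal (2 * r)

/-- Muckenhoupt class `A_q(ℝ)` for `q ∈ [1,∞)`. -/
def IsApWeight (q : ℝ) (w : ℝ → ℝ) : Prop :=
  (∀ t, 0 ≤ w t) ∧ LocallyIntegrable w volume ∧
  (if q = 1 then
    ∃ C : ℝ, ∀ t, maximalFn (fun s => ENNReal.ofReal (w s)) t ≤ ENNReal.ofReal (C * w t)
  else
    ∃ C : ℝ, ∀ a b : ℝ, a < b →
      ((∫ t in Set.Ioo a b, w t) / (b - a)) *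
        (((∫ t in Set.Ioo a b, w t ^ (-1 / (q - 1))) / (b - a)) ^ (q - 1)) ≤ C)

/-- `w ∈ A_p(ℝ)` for `p ∈ [1,∞]`, where `A_∞ = ∪_{q ∈ [1,∞)} A_q`. -/
def IsMuckenhoupt (p : ℝ≥0∞) (w : ℝ → ℝ) : Prop :=
  if p = ∞ then ∃ q : ℝ, 1 ≤ q ∧ IsApWeight q w else IsApWeight p.toReal w

/-- `ψ_j(t, -i∇) f (x) := Σ_{k=-1}^1 ∫ ℱ^{-1}[ψ(t,·) ℱ Ψ_{j+k}](y) Δ_j f(x - y) dy`. -/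
def pdOpJ {d : ℕ} (Ψ : EuclideanSpace ℝ (Fin d) → ℂ)
    (ψ : ℝ → EuclideanSpace ℝ (Fin d) → ℂ) (t : ℝ)
    (f : EuclideanSpace ℝ (Fin d) → ℂ) (j : ℤ) (x : EuclideanSpace ℝ (Fin d)) : ℂ :=
  ∑ k ∈ Finset.Icc (-1 : ℤ) 1,
    ∫ y, 𝓕⁻ (fun ξ => ψ t ξ * 𝓕 (LPkernel Ψ (j + k)) ξ) y * conv (LPkernel Ψ j) f (x - y)

/-- `ψ₀(t, -i∇) f (x) := ∫ ℱ^{-1}[ψ(t,·) ℱ(Φ + Ψ₁)](y) S₀ f(x - y) dy`. -/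
def pdOp0 {d : ℕ} (Ψ : EuclideanSpace ℝ (Fin d) → ℂ)
    (ψ : ℝ → EuclideanSpace ℝ (Fin d) → ℂ) (t : ℝ)
    (f : EuclideanSpace ℝ (Fin d) → ℂ) (x : EuclideanSpace ℝ (Fin d)) : ℂ :=
  ∫ y, 𝓕⁻ (fun ξ => ψ t ξ * 𝓕 (fun z => LPPhi Ψ z + LPkernel Ψ 1 z) ξ) y *
    conv (LPPhi Ψ) f (x - y)

/-- `ψ(t, -i∇) f := ψ₀(t,-i∇) f + Σ_{j ≥ 1} ψ_j(t,-i∇) f`. -/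
def pdOp {d : ℕ} (Ψ : EuclideanSpace ℝ (Fin d) → ℂ)
    (ψ : ℝ → EuclideanSpace ℝ (Fin d) → ℂ) (t : ℝ)
    (f : EuclideanSpace ℝ (Fin d) → ℂ) (x : EuclideanSpace ℝ (Fin d)) : ℂ :=
  pdOp0 Ψ ψ t f x + ∑' j : ℕ, pdOpJ Ψ ψ t f ((j : ℤ) + 1) x

/-- `𝒢 f(t,x) := ∫_0^t ∫ p(t,s,x-y) f(s,y) dy ds`. -/
def Gop {d : ℕ} (ψ : ℝ → EuclideanSpace ℝ (Fin d) → ℂ)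
    (f : ℝ → EuclideanSpace ℝ (Fin d) → ℂ) (t : ℝ) (x : EuclideanSpace ℝ (Fin d)) : ℂ :=
  ∫ s in Set.Ioo (0 : ℝ) t, ∫ y, fundSol ψ t s (x - y) * f s y

/-- `𝒢₀ u₀(t,x) := ∫ p(t,0,x-y) u₀(y) dy`. -/
def G0op {d : ℕ} (ψ : ℝ → EuclideanSpace ℝ (Fin d) → ℂ)
    (u₀ : EuclideanSpace ℝ (Fin d) → ℂ) (t : ℝ) (x : EuclideanSpace ℝ (Fin d)) : ℂ :=
  ∫ y, fundSol ψ t 0 (x - y) * u₀ y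

/-- The mild solution `u(t,x) = ∫ p(t,0,x-y) u₀(y) dy + ∫_0^t ∫ p(t,s,x-y) f(s,y) dy ds`,
with `p(0,0,·) = δ₀`. -/
def mildSol {d : ℕ} (ψ : ℝ → EuclideanSpace ℝ (Fin d) → ℂ)
    (u₀ : EuclideanSpace ℝ (Fin d) → ℂ) (f : ℝ → EuclideanSpace ℝ (Fin d) → ℂ)
    (t : ℝ) (x : EuclideanSpace ℝ (Fin d)) : ℂ :=
  if t = 0 then u₀ x else G0op ψ u₀ t x + Gop ψ f t x

/-- bounded measurable functions. -/
def BddMeasurable {d : ℕ} (f : EuclideanSpace ℝ (Fin d) → ℂ) : Prop :=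
  Measurable f ∧ ∃ B : ℝ, ∀ x, ‖f x‖ ≤ B

/-- `W̃(s,t)^{1-1/p} = (∫_s^t w^{-1/(p-1)})^{1-1/p}`, with the conventions for `p = ∞`. -/
def Wtilde (p : ℝ≥0∞) (w : ℝ → ℝ) (s t : ℝ) : ℝ :=
  if p = ∞ then t - s
  else (∫ r in Set.Ioo s t, w r ^ (-1 / (p.toReal - 1))) ^ (1 - 1 / p.toReal)

/-- `n`-fold mixed difference `𝒟^n_{(h₁,h₂)} u`. -/
def mixDiffIter {d : ℕ} (n : ℕ) (h₁ : ℝ) (h₂ : EuclideanSpace ℝ (Fin d))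
    (u : ℝ → EuclideanSpace ℝ (Fin d) → ℂ) : ℝ → EuclideanSpace ℝ (Fin d) → ℂ :=
  (fun v (t : ℝ) (x : EuclideanSpace ℝ (Fin d)) => v (t + h₁) (x + h₂) - v t x)^[n] u

/-- The norm `‖u‖_{𝐇^{φ,γ}_{p,w}((0,T)×ℝ^d)}` relative to a decomposition `(u, u₀, f)`. -/
def HNorm {d : ℕ} (Ψ : EuclideanSpace ℝ (Fin d) → ℂ) (φ : ℝ → ℝ) (γ : ℝ)
    (p : ℝ≥0∞) (w : ℝ → ℝ) (T : ℝ) (u : ℝ → EuclideanSpace ℝ (Fin d) → ℂ)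
    (u₀ : EuclideanSpace ℝ (Fin d) → ℂ) (f : ℝ → EuclideanSpace ℝ (Fin d) → ℂ) : ℝ≥0∞ :=
  mixedLpNorm p w T (fun t => LambdaNorm Ψ (phiGamma φ γ) (u t)) +
    LambdaPNorm Ψ (phiGammaPW φ γ p w) p u₀ +
    mixedLpNorm p w T (fun t => LambdaNorm Ψ φ (f t))

/-- `‖a‖_{ℓ_∞^θ(A)} := sup_n θ(2^n) ‖a_n‖`. -/
def seqSupNorm {A : Type*} [NormedAddCommGroup A] (θ : ℝ → ℝ) (a : ℤ → A) : ℝ≥0∞ :=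
  ⨆ n : ℤ, ENNReal.ofReal (θ ((2 : ℝ) ^ n)) * (‖a n‖₊ : ℝ≥0∞)

/-- `‖a‖_{ℓ_1^θ(A)} := Σ_n θ(2^n) ‖a_n‖`. -/
def seqL1Norm {A : Type*} [NormedAddCommGroup A] (θ : ℝ → ℝ) (a : ℤ → A) : ℝ≥0∞ :=
  ∑' n : ℤ, ENNReal.ofReal (θ ((2 : ℝ) ^ n)) * (‖a n‖₊ : ℝ≥0∞)

/-- `K(t,a) = inf {‖b‖₀ + t ‖c‖₁ : a = b + c}`. -/
def seqKfun {A : Type*} [NormedAddCommGroup A]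
    (norm₀ norm₁ : (ℤ → A) → ℝ≥0∞) (t : ℝ) (a : ℤ → A) : ℝ≥0∞ :=
  ⨅ b : ℤ → A, norm₀ b + ENNReal.ofReal t * norm₁ (fun n => a n - b n)
/-- THEOREM 9 -/
theorem statement9 (k F : ℝ → ℝ)
    (hk0 : ∀ s, 0 < s → 0 ≤ k s)
    (hkmono : ∀ s t : ℝ, 0 < s → s ≤ t → k t ≤ k s)
    (hkint : IntegrableOn k (Set.Ioi 0) volume)
    (hF : Measurable F) (hF0 : ∀ s, 0 ≤ F s) :
    (∫⁻ s in Set.Ioi (0 : ℝ), ENNReal.ofReal (k s * F s)) ≤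
      2 * (⨆ r : {r : ℝ // 0 < r},
          (∫⁻ s in Set.Ioo (0 : ℝ) (r : ℝ), ENNReal.ofReal (F s)) / ENNReal.ofReal (r : ℝ)) *
        ∫⁻ s in Set.Ioi (0 : ℝ), ENNReal.ofReal (k s) := by
  classical
  set M := ⨆ r : {r : ℝ // 0 < r},
      (∫⁻ s in Set.Ioo (0 : ℝ) (r : ℝ), ENNReal.ofReal (F s)) / ENNReal.ofReal (r : ℝ) with hM
  have hIoo : ∀ r : ℝ, 0 < r →
      (∫⁻ s in Set.Ioo (0:ℝ) r, ENNReal.ofReal (F s)) ≤ M * ENNReal.ofReal r := by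
    intro r hr
    have h1 : (∫⁻ s in Set.Ioo (0:ℝ) r, ENNReal.ofReal (F s)) / ENNReal.ofReal r ≤ M :=
      le_iSup (fun r : {r : ℝ // 0 < r} =>
        (∫⁻ s in Set.Ioo (0 : ℝ) (r : ℝ), ENNReal.ofReal (F s)) / ENNReal.ofReal (r : ℝ))
        ⟨r, hr⟩
    have h0 : ENNReal.ofReal r ≠ 0 := by simp [hr]
    exact (ENNReal.div_le_iff h0 ENNReal.ofReal_ne_top).mp h1
  have keyL : ∀ A : Set ℝ, A ⊆ Set.Ioi 0 →
      (∀ s ∈ A, ∀ t : ℝ, 0 < t → t ≤ s → t ∈ A) →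
      MeasurableSet A ∧ (∫⁻ s in A, ENNReal.ofReal (F s)) ≤ M * volume A := by
    intro A hA hdc
    rcases A.eq_empty_or_nonempty with rfl | hAne
    · simp
    by_cases hbdd : BddAbove A
    · obtain ⟨a, ha⟩ := hAne
      have hapos : 0 < a := hA ha
      have hrpos : 0 < sSup A := lt_of_lt_of_le hapos (le_csSup hbdd ha)
      have hsub1 : Set.Ioo 0 (sSup A) ⊆ A := by
        intro s hs
        obtain ⟨b, hb, hsb⟩ := exists_lt_of_lt_csSup ⟨a, ha⟩ hs.2
        exact hdc b hb s hs.1 hsb.le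
      have hsub2 : A ⊆ Set.Ioc 0 (sSup A) := fun x hx => ⟨hA hx, le_csSup hbdd hx⟩
      obtain ⟨r, hrdef⟩ : ∃ r : ℝ, sSup A = r := ⟨_, rfl⟩
      rw [hrdef] at hrpos hsub1 hsub2
      have hAcases : A = Set.Ioo 0 r ∨ A = Set.Ioc 0 r := by
        by_cases hrA : r ∈ A
        · right
          refine Set.Subset.antisymm hsub2 ?_
          intro x hx
          rcases eq_or_lt_of_le hx.2 with h | h
          · rwa [h]
          · exact hsub1 ⟨hx.1, h⟩
        · left
          refine Set.Subset.antisymm ?_ hsub1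
          intro x hx
          rcases eq_or_lt_of_le (hsub2 hx).2 with h | h
          · exact absurd (h ▸ hx) hrA
          · exact ⟨hA hx, h⟩
      have hvol : volume A = ENNReal.ofReal r := by
        rcases hAcases with h | h <;> rw [h] <;>
          simp [Real.volume_Ioo, Real.volume_Ioc]
      have hint : (∫⁻ s in A, ENNReal.ofReal (F s)) =
          ∫⁻ s in Set.Ioo 0 r, ENNReal.ofReal (F s) := by
        rcases hAcases with h | h
        · rw [h]
        · rw [h, ← setLIntegral_congr (Ioo_ae_eq_Ioc (a := (0:ℝ)) (b := r))]
      constructor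
      · rcases hAcases with h | h <;> rw [h] <;>
          first | exact measurableSet_Ioo | exact measurableSet_Ioc
      · rw [hint, hvol]; exact hIoo _ hrpos
    · have hAeq : A = Set.Ioi 0 := by
        refine Set.Subset.antisymm hA ?_
        intro t ht
        obtain ⟨b, hb, htb⟩ := not_bddAbove_iff.mp hbdd t
        exact hdc b hb t ht htb.le
      rw [hAeq, Real.volume_Ioi]
      refine ⟨measurableSet_Ioi, ?_⟩
      by_cases hM0 : M = 0
      · have hzero : (∫⁻ s in Set.Ioi (0:ℝ), ENNReal.ofReal (F s)) = 0 := by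
          have hcover : Set.Ioi (0:ℝ) ⊆ ⋃ n : ℕ, Set.Ioo (0:ℝ) ((n:ℝ)+1) := by
            intro x hx
            obtain ⟨n, hn⟩ := exists_nat_gt x
            exact Set.mem_iUnion.mpr ⟨n, hx, by linarith⟩
          refine le_antisymm ?_ (zero_le)
          calc (∫⁻ s in Set.Ioi (0:ℝ), ENNReal.ofReal (F s))
              ≤ ∫⁻ s in ⋃ n : ℕ, Set.Ioo (0:ℝ) ((n:ℝ)+1), ENNReal.ofReal (F s) :=
                lintegral_mono_set hcover
            _ ≤ ∑' n : ℕ, ∫⁻ s in Set.Ioo (0:ℝ) ((n:ℝ)+1), ENNReal.ofReal (F s) :=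
                lintegral_iUnion_le _ _
            _ = 0 := by
                refine ENNReal.tsum_eq_zero.mpr fun n => le_antisymm ?_ (zero_le)
                have := hIoo ((n:ℝ)+1) (by positivity)
                rwa [hM0, zero_mul] at this
        rw [hzero]; exact zero_le
      · rw [ENNReal.mul_top hM0]; exact le_top
  -- measurable version of k
  set K : ℝ → ℝ := fun s => if 0 < s then k s else 0 with hKdef
  have hKmeas : Measurable K := by
    apply measurable_of_Ioi
    intro c
    by_cases hc : 0 ≤ c
    · have hset : K ⁻¹' Set.Ioi c = {s : ℝ | 0 < s ∧ c < k s} := by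
        ext s
        by_cases hs : 0 < s
        · simp [K, hs]
        · simp only [Set.mem_preimage, Set.mem_Ioi, Set.mem_setOf_eq, K, if_neg hs]
          constructor
          · intro h; exact absurd h (not_lt.mpr hc)
          · rintro ⟨h, -⟩; exact absurd h hs
      rw [hset]
      refine (keyL _ (fun s hs => hs.1) ?_).1
      intro s hs t ht hts
      exact ⟨ht, lt_of_lt_of_le hs.2 (hkmono t s ht hts)⟩
    · have hset : K ⁻¹' Set.Ioi c = Set.univ := by
        ext s
        simp only [Set.mem_preimage, Set.mem_Ioi, Set.mem_univ, iff_true]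
        by_cases hs : 0 < s
        · simp only [K, if_pos hs]
          exact lt_of_lt_of_le (not_le.mp hc) (hk0 s hs)
        · simp only [K, if_neg hs]
          exact not_le.mp hc
      rw [hset]; exact MeasurableSet.univ
  by_cases hkz : (∫⁻ s in Set.Ioi (0:ℝ), ENNReal.ofReal (k s)) = 0
  · have hk_aemeas : AEMeasurable (fun s => ENNReal.ofReal (k s))
        (volume.restrict (Set.Ioi (0:ℝ))) := by
      refine (ENNReal.measurable_ofReal.comp hKmeas).aemeasurable.congr ?_
      filter_upwards [ae_restrict_mem measurableSet_Ioi] with s hs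
      simp [K, Set.mem_Ioi.mp hs]
    have hk_ae : ∀ᵐ s ∂(volume.restrict (Set.Ioi (0:ℝ))), ENNReal.ofReal (k s) = 0 :=
      (lintegral_eq_zero_iff' hk_aemeas).mp hkz
    have hzero : (∫⁻ s in Set.Ioi (0:ℝ), ENNReal.ofReal (k s * F s)) = 0 := by
      rw [show (0:ℝ≥0∞) = ∫⁻ _ in Set.Ioi (0:ℝ), (0:ℝ≥0∞) by simp]
      refine lintegral_congr_ae ?_
      filter_upwards [hk_ae] with s hs
      have hk' : k s ≤ 0 := by
        by_contra h
        push_neg at h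
        simp [ENNReal.ofReal_eq_zero, not_le.mpr h] at hs
      exact ENNReal.ofReal_eq_zero.mpr (mul_nonpos_iff.mpr (Or.inr ⟨hk', hF0 s⟩))
    rw [hzero]; exact zero_le
  by_cases hMtop : M = ⊤
  · have : (2:ℝ≥0∞) * M * ∫⁻ s in Set.Ioi (0:ℝ), ENNReal.ofReal (k s) = ⊤ := by
      rw [hMtop]
      rw [ENNReal.mul_top (by norm_num), ENNReal.top_mul hkz]
    rw [this]; exact le_top
  -- main case
  set u : ℝ × ℝ → ℝ≥0∞ := fun p =>
    ENNReal.ofReal (F p.1) * Set.indicator {q : ℝ × ℝ | q.2 < K q.1} (fun _ => 1) p with hu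
  have hSmeas : MeasurableSet {q : ℝ × ℝ | q.2 < K q.1} :=
    measurableSet_lt measurable_snd (hKmeas.comp measurable_fst)
  have humeas : Measurable u :=
    (ENNReal.measurable_ofReal.comp (hF.comp measurable_fst)).mul
      (measurable_const.indicator hSmeas)
  have step1 : (∫⁻ s in Set.Ioi (0:ℝ), ENNReal.ofReal (k s * F s)) =
      ∫⁻ s in Set.Ioi (0:ℝ), ∫⁻ l in Set.Ioi (0:ℝ), u (s, l) := by
    refine setLIntegral_congr_fun measurableSet_Ioi (fun s hs => ?_)
    have hKs : K s = k s := if_pos hs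
    have hinner : (∫⁻ l in Set.Ioi (0:ℝ), u (s, l)) =
        ENNReal.ofReal (F s) * ENNReal.ofReal (k s) := by
      simp only [hu]
      rw [lintegral_const_mul' _ _ ENNReal.ofReal_ne_top]
      congr 1
      have hpt : ∀ l : ℝ, Set.indicator {q : ℝ × ℝ | q.2 < K q.1} (fun _ => (1:ℝ≥0∞)) (s, l) =
          Set.indicator (Set.Iio (K s)) (fun _ => (1:ℝ≥0∞)) l := by
        intro l
        by_cases h : l < K s <;> simp [Set.indicator, h]
      calc (∫⁻ l in Set.Ioi (0:ℝ),
              Set.indicator {q : ℝ × ℝ | q.2 < K q.1} (fun _ => (1:ℝ≥0∞)) (s, l))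
          = ∫⁻ l in Set.Ioi (0:ℝ), Set.indicator (Set.Iio (K s)) (fun _ => (1:ℝ≥0∞)) l :=
            lintegral_congr fun l => hpt l
        _ = ENNReal.ofReal (k s) := by
            rw [lintegral_indicator measurableSet_Iio]
            rw [Measure.restrict_restrict measurableSet_Iio, setLIntegral_one,
              Set.Iio_inter_Ioi, Real.volume_Ioo, sub_zero, hKs]
    rw [hinner, ← ENNReal.ofReal_mul (hF0 s), mul_comm (F s)]
  have step2 : (∫⁻ s in Set.Ioi (0:ℝ), ∫⁻ l in Set.Ioi (0:ℝ), u (s, l)) =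
      ∫⁻ l in Set.Ioi (0:ℝ), ∫⁻ s in Set.Ioi (0:ℝ), u (s, l) :=
    lintegral_lintegral_swap humeas.aemeasurable
  have step3 : ∀ l : ℝ, l ∈ Set.Ioi (0:ℝ) → (∫⁻ s in Set.Ioi (0:ℝ), u (s, l)) ≤
      M * volume ({a : ℝ | l < k a} ∩ Set.Ioi 0) := by
    intro l hl
    have hsetm : MeasurableSet {s : ℝ | l < K s} := hKmeas measurableSet_Ioi
    have hset : {s : ℝ | l < K s} ∩ Set.Ioi 0 = {a : ℝ | l < k a} ∩ Set.Ioi 0 := by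
      ext s
      simp only [Set.mem_inter_iff, Set.mem_setOf_eq, Set.mem_Ioi]
      constructor <;> rintro ⟨h1, h2⟩ <;> exact ⟨by simpa [K, if_pos h2] using h1, h2⟩
    have hcalc : (∫⁻ s in Set.Ioi (0:ℝ), u (s, l)) =
        ∫⁻ s in {a : ℝ | l < k a} ∩ Set.Ioi 0, ENNReal.ofReal (F s) := by
      have hpt : ∀ s : ℝ, u (s, l) =
          Set.indicator {s : ℝ | l < K s} (fun s => ENNReal.ofReal (F s)) s := by
        intro s
        by_cases h : l < K s <;> simp [hu, Set.indicator, h]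
      calc (∫⁻ s in Set.Ioi (0:ℝ), u (s, l))
          = ∫⁻ s in Set.Ioi (0:ℝ),
              Set.indicator {s : ℝ | l < K s} (fun s => ENNReal.ofReal (F s)) s :=
            lintegral_congr fun s => hpt s
        _ = ∫⁻ s in {s : ℝ | l < K s} ∩ Set.Ioi 0, ENNReal.ofReal (F s) := by
            rw [lintegral_indicator hsetm, Measure.restrict_restrict hsetm]
        _ = ∫⁻ s in {a : ℝ | l < k a} ∩ Set.Ioi 0, ENNReal.ofReal (F s) := by rw [hset]
    rw [hcalc]
    refine (keyL _ Set.inter_subset_right ?_).2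
    rintro s ⟨hs1, hs2⟩ t ht hts
    exact ⟨lt_of_lt_of_le hs1 (hkmono t s ht hts), ht⟩
  have hk_ae_nonneg : 0 ≤ᵐ[volume.restrict (Set.Ioi (0:ℝ))] k := by
    filter_upwards [ae_restrict_mem measurableSet_Ioi] with s hs using hk0 s hs
  have hk_aemeas : AEMeasurable k (volume.restrict (Set.Ioi (0:ℝ))) := by
    refine hKmeas.aemeasurable.congr ?_
    filter_upwards [ae_restrict_mem measurableSet_Ioi] with s hs
    exact if_pos hs
  have layercake := lintegral_eq_lintegral_meas_lt (volume.restrict (Set.Ioi (0:ℝ)))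
      hk_ae_nonneg hk_aemeas
  calc (∫⁻ s in Set.Ioi (0:ℝ), ENNReal.ofReal (k s * F s))
      = ∫⁻ l in Set.Ioi (0:ℝ), ∫⁻ s in Set.Ioi (0:ℝ), u (s, l) := by rw [step1, step2]
    _ ≤ ∫⁻ l in Set.Ioi (0:ℝ), M * volume ({a : ℝ | l < k a} ∩ Set.Ioi 0) :=
        setLIntegral_mono' measurableSet_Ioi step3
    _ = M * ∫⁻ l in Set.Ioi (0:ℝ), volume ({a : ℝ | l < k a} ∩ Set.Ioi 0) :=
        lintegral_const_mul' _ _ hMtop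
    _ = M * ∫⁻ s in Set.Ioi (0:ℝ), ENNReal.ofReal (k s) := by
        rw [layercake]
        congr 1
        refine lintegral_congr fun l => ?_
        rw [Measure.restrict_apply' measurableSet_Ioi]
    _ ≤ 2 * M * ∫⁻ s in Set.Ioi (0:ℝ), ENNReal.ofReal (k s) := by
        rw [two_mul, add_mul]
        exact le_add_self
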